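/- Let v ∈ H^n and let x be a positive light-like vector in R^{n+1}, with d defined by e^d = -v∘x. Then the point u = (1/2)(1 - 1/(v∘x)²)·x - (1/(v∘x))·v lies on the horosphere S determined by x (i.e., u∘u = -1 and u∘x = -1), and cosh d_H(u,v) = (1/2)(-v∘x + 1/(-v∘x)), so that d_H(u,v) = |d|. -/

import Mathlib

/-- The Lorentzian inner product on `ℝ^{n+1}`. -/
def lprod {n : ℕ} (x y : Fin (n + 1) → ℝ) : ℝ :=
  -(x 0 * y 0) + ∑ i : Fin n, x i.succ * y i.succ

lemma lprod_comm {n : ℕ} (x y : Fin (n + 1) → ℝ) : lprod x y = lprod y x := by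
  simp [lprod, mul_comm]

lemma lprod_smul_sub_left {n : ℕ} (a b : ℝ) (x v y : Fin (n + 1) → ℝ) :
    lprod (a • x - b • v) y = a * lprod x y - b * lprod v y := by
  simp only [lprod, Pi.sub_apply, Pi.smul_apply, smul_eq_mul, sub_mul, mul_assoc,
    Finset.sum_sub_distrib, ← Finset.mul_sum]
  ring

/-- The nearest point on a horosphere to a point `v` of `H^n`, and the signed
distance formula `e^d = -v∘x`. -/
theorem nearest_point_on_horosphere {n : ℕ} (v x : Fin (n + 1) → ℝ)
    (hvH : lprod v v = -1) (hvpos : 0 < v 0)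
    (hxx : lprod x x = 0) (hx0 : 0 < x 0)
    (d : ℝ) (hd : Real.exp d = -lprod v x) :
    letI u : Fin (n + 1) → ℝ :=
      ((1 - 1 / (lprod v x) ^ 2) / 2) • x - (1 / lprod v x) • v
    lprod u u = -1 ∧ lprod u x = -1 ∧
    -lprod u v = (-lprod v x + 1 / (-lprod v x)) / 2 ∧
    Real.cosh |d| = -lprod u v := by
  set c := lprod v x with hc
  have hcneg : c < 0 := by
    have := Real.exp_pos d
    rw [hd] at this
    linarith
  have hcne : c ≠ 0 := ne_of_lt hcneg
  have hxv : lprod x v = c := by rw [lprod_comm]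
  have hux : lprod (((1 - 1 / c ^ 2) / 2) • x - (1 / c) • v) x = -1 := by
    rw [lprod_smul_sub_left, hxx, ← hc]
    field_simp [hcne]
    ring
  have huv : lprod (((1 - 1 / c ^ 2) / 2) • x - (1 / c) • v) v = (c + 1 / c) / 2 := by
    rw [lprod_smul_sub_left, hxv, hvH]
    field_simp [hcne]
    ring
  have huu : lprod (((1 - 1 / c ^ 2) / 2) • x - (1 / c) • v)
      (((1 - 1 / c ^ 2) / 2) • x - (1 / c) • v) = -1 := by
    rw [lprod_smul_sub_left]
    have h1 : lprod x (((1 - 1 / c ^ 2) / 2) • x - (1 / c) • v) = -1 := by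
      rw [lprod_comm]; exact hux
    have h2 : lprod v (((1 - 1 / c ^ 2) / 2) • x - (1 / c) • v) = (c + 1 / c) / 2 := by
      rw [lprod_comm, lprod_smul_sub_left, hxv, hvH]
      field_simp [hcne]
      ring
    rw [h1, h2]
    field_simp [hcne]
    ring
  refine ⟨huu, hux, by rw [huv]; field_simp [hcne]; ring, ?_⟩
  rw [Real.cosh_abs, Real.cosh_eq, huv, Real.exp_neg, hd]
  have : (0:ℝ) < -c := by linarith
  field_simp [hcne]
  ring
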